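/- Define G(x) = (C₁ − 2z + x)·(1 − h((C₂ − z + x)/(C₁ − 2z + x))) where C₁, C₂, z are constants with C₁ − 2z + x > 0 and e₁(x) := (C₂ − z + x)/(C₁ − 2z + x) ∈ (0, 1/2). Then dG/dx = 1 + log₂(e₁(x)) < 0, i.e., G is strictly decreasing in x on this domain. -/

import Mathlib

noncomputable def binEnt (x : ℝ) : ℝ :=
  -x * Real.logb 2 x - (1 - x) * Real.logb 2 (1 - x)

lemma hasDerivAt_mul_logb {t : ℝ} (ht : t ≠ 0) :
    HasDerivAt (fun s => s * Real.logb 2 s) (Real.logb 2 t + (Real.log 2)⁻¹) t := by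
  have h := (Real.hasDerivAt_mul_log ht).mul_const (Real.log 2)⁻¹
  have : (fun s => s * Real.log s * (Real.log 2)⁻¹) = fun s => s * Real.logb 2 s := by
    funext s; rw [Real.logb, div_eq_mul_inv]; ring
  rw [this] at h
  refine h.congr_deriv ?_
  rw [Real.logb, div_eq_mul_inv]; ring

theorem derivative_G_neg (C₁ C₂ z x : ℝ)
    (hDx : 0 < C₁ - 2 * z + x)
    (e₁ : ℝ) (he₁def : e₁ = (C₂ - z + x) / (C₁ - 2 * z + x))
    (he₁ : e₁ ∈ Set.Ioo (0 : ℝ) (1 / 2)) :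
    HasDerivAt (fun x' => (C₁ - 2 * z + x') *
        (1 - binEnt ((C₂ - z + x') / (C₁ - 2 * z + x'))))
      (1 + Real.logb 2 e₁) x ∧ 1 + Real.logb 2 e₁ < 0 := by
  obtain ⟨he0, he2⟩ := he₁
  have hN : 0 < C₂ - z + x := by
    have := he0
    rw [he₁def] at this
    exact (div_pos_iff.mp this).resolve_right (fun h => absurd hDx (not_lt.mpr h.2.le)) |>.1
  have hK : 0 < C₁ - C₂ - z := by
    have h2 : e₁ < 1 := lt_trans he2 (by norm_num)
    rw [he₁def, div_lt_one hDx] at h2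
    linarith
  constructor
  · -- derivative part
    -- F(x') = (C₁-2z+x') + g(C₂-z+x') + g(C₁-C₂-z) - g(C₁-2z+x'), g t = t logb 2 t
    have hgN : HasDerivAt (fun x' => (C₂ - z + x') * Real.logb 2 (C₂ - z + x'))
        (Real.logb 2 (C₂ - z + x) + (Real.log 2)⁻¹) x := by
      have hinner : HasDerivAt (fun x' : ℝ => C₂ - z + x') 1 x := by
        simpa using (hasDerivAt_id x).const_add (C₂ - z)
      have := (hasDerivAt_mul_logb hN.ne').comp x hinner
      simpa [Function.comp_def] using this
    have hgD : HasDerivAt (fun x' => (C₁ - 2 * z + x') * Real.logb 2 (C₁ - 2 * z + x'))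
        (Real.logb 2 (C₁ - 2 * z + x) + (Real.log 2)⁻¹) x := by
      have hinner : HasDerivAt (fun x' : ℝ => C₁ - 2 * z + x') 1 x := by
        simpa using (hasDerivAt_id x).const_add (C₁ - 2 * z)
      have := (hasDerivAt_mul_logb hDx.ne').comp x hinner
      simpa [Function.comp_def] using this
    have hid : HasDerivAt (fun x' : ℝ => C₁ - 2 * z + x') 1 x := by
      simpa using (hasDerivAt_id x).const_add (C₁ - 2 * z)
    have hF : HasDerivAt (fun x' => (C₁ - 2 * z + x')
        + (C₂ - z + x') * Real.logb 2 (C₂ - z + x')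
        + (C₁ - C₂ - z) * Real.logb 2 (C₁ - C₂ - z)
        - (C₁ - 2 * z + x') * Real.logb 2 (C₁ - 2 * z + x'))
        (1 + Real.logb 2 e₁) x := by
      have := ((hid.add hgN).add_const ((C₁ - C₂ - z) * Real.logb 2 (C₁ - C₂ - z))).sub hgD
      refine this.congr_deriv ?_
      rw [he₁def, Real.logb_div hN.ne' hDx.ne']
      ring
    apply hF.congr_of_eventuallyEq
    have hev : ∀ᶠ x' in nhds x, 0 < C₂ - z + x' ∧ 0 < C₁ - 2 * z + x' := by
      have c1 : ContinuousAt (fun x' : ℝ => C₂ - z + x') x := by fun_prop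
      have c2 : ContinuousAt (fun x' : ℝ => C₁ - 2 * z + x') x := by fun_prop
      filter_upwards [continuousAt_const.eventually_lt c1 hN,
        continuousAt_const.eventually_lt c2 hDx] with a ha hb using ⟨ha, hb⟩
    filter_upwards [hev] with a ⟨haN, haD⟩
    have haK : C₁ - C₂ - z = (C₁ - 2 * z + a) - (C₂ - z + a) := by ring
    have h1 : (1 : ℝ) - (C₂ - z + a) / (C₁ - 2 * z + a)
        = (C₁ - C₂ - z) / (C₁ - 2 * z + a) := by
      rw [one_sub_div haD.ne']; ring
    rw [binEnt, h1, Real.logb_div hK.ne' haD.ne', Real.logb_div haN.ne' haD.ne']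
    field_simp
    ring
  · -- negativity
    have : Real.logb 2 e₁ < Real.logb 2 (1 / 2) :=
      Real.logb_lt_logb (by norm_num) he0 he2
    have h12 : Real.logb 2 (1 / 2) = -1 := by
      rw [one_div, Real.logb_inv, Real.logb_self_eq_one]; norm_num
    linarith
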